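/- Let h : ℝ^d → [0,1] be measurable, let σ > 0, and define the Gaussian-smoothed function p(x) := ∫ h(x + δ) dN(0, σ²I)(δ). Then the map x ↦ σ·Φ⁻¹(p(x)) is 1-Lipschitz with respect to the Euclidean norm: for all x, x' ∈ ℝ^d with p(x), p(x') ∈ (0,1), one has σ·|Φ⁻¹(p(x)) − Φ⁻¹(p(x'))| ≤ ‖x − x'‖. -/

import Mathlib

open MeasureTheory ProbabilityTheory Real Set Filter
open scoped NNReal ENNReal

/-- The standard Gaussian CDF `Φ`. -/
noncomputable def stdGaussianCDF (a : ℝ) : ℝ :=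
  ((gaussianReal 0 1) (Set.Iic a)).toReal

/-- The inverse `Φ⁻¹` of the standard Gaussian CDF (on `(0,1)`). -/
noncomputable def stdGaussianCDFInv (p : ℝ) : ℝ :=
  sSup {a : ℝ | stdGaussianCDF a ≤ p}

/-- The Gaussian measure `N(0, σ²I)` on `ℝ^d` (with the Euclidean norm), obtained as the
`d`-fold product of the real Gaussian measure with mean `0` and variance `σ²`. -/
noncomputable def gaussianE (d : ℕ) (σ : ℝ) : Measure (EuclideanSpace ℝ (Fin d)) :=
  (Measure.pi fun _ : Fin d => gaussianReal 0 ⟨σ ^ 2, sq_nonneg σ⟩).map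
    (MeasurableEquiv.toLp 2 (Fin d → ℝ))

/-- Lemma B.1: for measurable `h : ℝ^d → [0,1]` and `σ > 0`, the map
`x ↦ σ·Φ⁻¹(p(x))`, where `p(x) = ∫ h(x + δ) dN(0, σ²I)(δ)`, is 1-Lipschitz. -/

lemma stdGaussianCDF_eq_cdf (a : ℝ) : stdGaussianCDF a = cdf (gaussianReal 0 1) a := by
  rw [ProbabilityTheory.cdf_eq_real]; rfl

lemma monotone_stdGaussianCDF : Monotone stdGaussianCDF := by
  intro a b hab
  simp only [stdGaussianCDF_eq_cdf]
  exact ProbabilityTheory.monotone_cdf _ hab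

lemma tendsto_stdGaussianCDF_atBot : Tendsto stdGaussianCDF atBot (nhds 0) := by
  simp only [funext stdGaussianCDF_eq_cdf]
  exact ProbabilityTheory.tendsto_cdf_atBot _

lemma tendsto_stdGaussianCDF_atTop : Tendsto stdGaussianCDF atTop (nhds 1) := by
  simp only [funext stdGaussianCDF_eq_cdf]
  exact ProbabilityTheory.tendsto_cdf_atTop _

lemma gaussianPDFReal_le_one (x : ℝ) : gaussianPDFReal 0 1 x ≤ 1 := by
  rw [gaussianPDFReal]
  have h1 : Real.exp (-(x - 0) ^ 2 / (2 * ((1:ℝ≥0):ℝ))) ≤ 1 := by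
    rw [Real.exp_le_one_iff]
    have : (0:ℝ) ≤ (x - 0)^2 := sq_nonneg _
    have h2 : (0:ℝ) < 2 * ((1:ℝ≥0):ℝ) := by norm_num
    apply div_nonpos_of_nonpos_of_nonneg <;> nlinarith
  have h0 : (Real.sqrt (2 * π * ((1:ℝ≥0):ℝ)))⁻¹ ≤ 1 := by
    rw [inv_le_one_iff₀]
    right
    rw [show (1:ℝ) = Real.sqrt 1 by simp]
    apply Real.sqrt_le_sqrt
    push_cast
    nlinarith [Real.pi_gt_three]
  calc (Real.sqrt (2 * π * ((1:ℝ≥0):ℝ)))⁻¹ * Real.exp (-(x - 0) ^ 2 / (2 * ((1:ℝ≥0):ℝ)))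
      ≤ 1 * 1 := by
        apply mul_le_mul h0 h1 (Real.exp_nonneg _) zero_le_one
    _ = 1 := by norm_num

lemma lipschitz_stdGaussianCDF : LipschitzWith 1 stdGaussianCDF := by
  have key : ∀ a b : ℝ, a ≤ b → stdGaussianCDF b - stdGaussianCDF a ≤ b - a := by
    intro a b hab
    have hIic : Set.Iic b = Set.Iic a ∪ Set.Ioc a b := by
      rw [Set.Iic_union_Ioc_eq_Iic hab]
    have hmeas : (gaussianReal 0 1) (Set.Ioc a b) ≤ ENNReal.ofReal (b - a) := by
      rw [gaussianReal_apply 0 one_ne_zero]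
      calc ∫⁻ x in Set.Ioc a b, gaussianPDF 0 1 x
          ≤ ∫⁻ _x in Set.Ioc a b, (1:ℝ≥0∞) := by
            apply setLIntegral_mono measurable_const
            intro x _
            rw [gaussianPDF]
            exact ENNReal.ofReal_le_of_le_toReal (by simpa using gaussianPDFReal_le_one x)
        _ = volume (Set.Ioc a b) := by simp
        _ = ENNReal.ofReal (b - a) := by rw [Real.volume_Ioc]
    have hsplit : (gaussianReal 0 1) (Set.Iic b)
        = (gaussianReal 0 1) (Set.Iic a) + (gaussianReal 0 1) (Set.Ioc a b) := by
      rw [hIic, measure_union _ measurableSet_Ioc]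
      rw [Set.disjoint_left]
      intro y hy hy2
      exact absurd hy2.1 (not_lt.mpr hy)
    have hfin : (gaussianReal 0 1) (Set.Iic a) ≠ ⊤ := measure_ne_top _ _
    have hfin2 : (gaussianReal 0 1) (Set.Ioc a b) ≠ ⊤ := measure_ne_top _ _
    rw [stdGaussianCDF, stdGaussianCDF, hsplit, ENNReal.toReal_add hfin hfin2]
    have := ENNReal.toReal_le_of_le_ofReal (by linarith) hmeas
    linarith
  apply LipschitzWith.of_dist_le_mul
  intro a b
  rw [NNReal.coe_one, one_mul, Real.dist_eq, Real.dist_eq]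
  rcases le_total a b with hab | hab
  · have h1 := key a b hab
    have h2 := monotone_stdGaussianCDF hab
    rw [abs_sub_comm, abs_of_nonneg (by linarith), abs_sub_comm, abs_of_nonneg (by linarith)]
    linarith
  · have h1 := key b a hab
    have h2 := monotone_stdGaussianCDF hab
    rw [abs_of_nonneg (by linarith), abs_of_nonneg (by linarith)]
    linarith

lemma continuous_stdGaussianCDF : Continuous stdGaussianCDF :=
  lipschitz_stdGaussianCDF.continuous

lemma bddAbove_setOf_cdf_le {q : ℝ} (hq : q < 1) : BddAbove {a : ℝ | stdGaussianCDF a ≤ q} := by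
  have : ∀ᶠ b in atTop, q < stdGaussianCDF b :=
    tendsto_stdGaussianCDF_atTop.eventually_const_lt hq
  obtain ⟨b, hb⟩ := this.exists
  refine ⟨b, fun a ha => ?_⟩
  by_contra hab
  push_neg at hab
  exact absurd (le_trans (monotone_stdGaussianCDF hab.le) ha) (not_le.mpr hb)

lemma nonempty_setOf_cdf_le {q : ℝ} (hq : 0 < q) : {a : ℝ | stdGaussianCDF a ≤ q}.Nonempty := by
  have : ∀ᶠ a in atBot, stdGaussianCDF a < q :=
    tendsto_stdGaussianCDF_atBot.eventually_lt_const hq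
  obtain ⟨a, ha⟩ := this.exists
  exact ⟨a, ha.le⟩

lemma stdGaussianCDF_stdGaussianCDFInv {q : ℝ} (hq : q ∈ Set.Ioo (0:ℝ) 1) :
    stdGaussianCDF (stdGaussianCDFInv q) = q := by
  set A := {a : ℝ | stdGaussianCDF a ≤ q} with hA
  have hclosed : IsClosed A := isClosed_le continuous_stdGaussianCDF continuous_const
  have hne := nonempty_setOf_cdf_le hq.1
  have hbdd := bddAbove_setOf_cdf_le hq.2
  have hmem : sSup A ∈ A := hclosed.csSup_mem hne hbdd
  refine le_antisymm hmem ?_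
  by_contra hlt
  push_neg at hlt
  have hev : ∀ᶠ t in nhds (sSup A), stdGaussianCDF t < q :=
    (continuous_stdGaussianCDF.tendsto _).eventually (gt_mem_nhds hlt)
  obtain ⟨b, hb, hbq⟩ := hev.exists_gt
  exact absurd (le_csSup hbdd hbq.le) (not_le.mpr hb)

lemma le_stdGaussianCDFInv {q t : ℝ} (hq : q < 1) (ht : stdGaussianCDF t ≤ q) :
    t ≤ stdGaussianCDFInv q :=
  le_csSup (bddAbove_setOf_cdf_le hq) ht

lemma gaussianPDFReal_le (v : ℝ≥0) (μ x : ℝ) :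
    gaussianPDFReal μ v x ≤ (Real.sqrt (2 * π * v))⁻¹ := by
  rw [gaussianPDFReal]
  have h1 : Real.exp (-(x - μ) ^ 2 / (2 * v)) ≤ 1 := by
    rw [Real.exp_le_one_iff]
    apply div_nonpos_of_nonpos_of_nonneg
    · nlinarith [sq_nonneg (x - μ)]
    · positivity
  calc (Real.sqrt (2 * π * v))⁻¹ * Real.exp (-(x - μ) ^ 2 / (2 * v))
      ≤ (Real.sqrt (2 * π * v))⁻¹ * 1 := by
        apply mul_le_mul_of_nonneg_left h1 (by positivity)
    _ = _ := mul_one _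

lemma pdf_mul_pdf (a b : ℝ) (ha : 0 < a) (hb : 0 < b) (u x : ℝ) :
    gaussianPDFReal 0 a.toNNReal x * gaussianPDFReal 0 b.toNNReal (u - x)
      = gaussianPDFReal 0 (a + b).toNNReal u
        * gaussianPDFReal (a * u / (a + b)) (a * b / (a + b)).toNNReal x := by
  have hab : 0 < a + b := by linarith
  have hq : 0 < a * b / (a + b) := by positivity
  simp only [gaussianPDFReal, Real.coe_toNNReal _ ha.le, Real.coe_toNNReal _ hb.le,
    Real.coe_toNNReal _ hab.le, Real.coe_toNNReal _ hq.le]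
  rw [mul_mul_mul_comm, mul_mul_mul_comm ((Real.sqrt (2 * π * (a+b)))⁻¹),
    ← Real.exp_add, ← Real.exp_add]
  congr 1
  · rw [← mul_inv, ← mul_inv, ← Real.sqrt_mul (by positivity), ← Real.sqrt_mul (by positivity)]
    congr 2
    field_simp
  · rw [Real.exp_eq_exp]
    field_simp
    ring

lemma conv_integral (a b : ℝ) (ha : 0 < a) (hb : 0 < b) (u : ℝ) :
    ∫ x, gaussianPDFReal 0 a.toNNReal x * gaussianPDFReal 0 b.toNNReal (u - x)
      = gaussianPDFReal 0 (a + b).toNNReal u := by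
  have hq : (0:ℝ) < a * b / (a + b) := by positivity
  have hqne : (a * b / (a + b)).toNNReal ≠ 0 := by
    simp [Real.toNNReal_eq_zero, not_le, hq]
  simp only [pdf_mul_pdf a b ha hb u]
  rw [MeasureTheory.integral_const_mul,
    integral_gaussianPDFReal_eq_one (a * u / (a + b)) hqne, mul_one]

lemma conv_integrable (a b : ℝ) (ha : 0 < a) (hb : 0 < b) (u : ℝ) :
    Integrable (fun x => gaussianPDFReal 0 a.toNNReal x * gaussianPDFReal 0 b.toNNReal (u - x)) := by
  have : ∀ x, gaussianPDFReal 0 a.toNNReal x * gaussianPDFReal 0 b.toNNReal (u - x)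
      = gaussianPDFReal 0 b.toNNReal (u - x) * gaussianPDFReal 0 a.toNNReal x := fun x => mul_comm _ _
  simp only [this]
  apply Integrable.bdd_mul (c := (Real.sqrt (2 * π * b.toNNReal))⁻¹) (integrable_gaussianPDFReal 0 a.toNNReal)
  · exact ((measurable_gaussianPDFReal 0 b.toNNReal).comp
      (measurable_const.sub measurable_id)).aestronglyMeasurable
  · refine Filter.Eventually.of_forall (fun x => ?_)
    rw [Real.norm_eq_abs, abs_of_nonneg (gaussianPDFReal_nonneg _ _ _)]
    exact gaussianPDFReal_le _ _ _

lemma conv_lintegral (a b : ℝ≥0) (ha : a ≠ 0) (hb : b ≠ 0) (u : ℝ) :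
    ∫⁻ x, (gaussianPDF 0 a x) * gaussianPDF 0 b (u - x) = gaussianPDF 0 (a + b) u := by
  have ha' : (0:ℝ) < a := by positivity
  have hb' : (0:ℝ) < b := by positivity
  have key := conv_integral a b ha' hb' u
  have hint := conv_integrable a b ha' hb' u
  rw [show ((a:ℝ) + (b:ℝ)) = ((a + b : ℝ≥0) : ℝ) by push_cast; ring] at key
  simp only [Real.toNNReal_coe] at key hint
  simp only [gaussianPDF]
  have hpt : ∀ x:ℝ, ENNReal.ofReal (gaussianPDFReal 0 a x)
      * ENNReal.ofReal (gaussianPDFReal 0 b (u-x))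
      = ENNReal.ofReal (gaussianPDFReal 0 a x * gaussianPDFReal 0 b (u-x)) :=
    fun x => (ENNReal.ofReal_mul (gaussianPDFReal_nonneg _ _ _)).symm
  simp only [hpt]
  rw [← ofReal_integral_eq_lintegral_ofReal hint (Filter.Eventually.of_forall fun x =>
      mul_nonneg (gaussianPDFReal_nonneg _ _ _) (gaussianPDFReal_nonneg _ _ _)), key]

lemma gaussianReal_conv (a b : ℝ≥0) :
    ((gaussianReal 0 a).prod (gaussianReal 0 b)).map (fun z : ℝ × ℝ => z.1 + z.2)
      = gaussianReal 0 (a + b) := by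
  rcases eq_or_ne a 0 with ha | ha
  · subst ha
    rw [gaussianReal_zero_var, Measure.dirac_prod,
      Measure.map_map measurable_add measurable_prodMk_left]
    have : ((fun z : ℝ × ℝ => z.1 + z.2) ∘ Prod.mk (0:ℝ)) = id := by
      funext y; simp
    rw [this, Measure.map_id, zero_add]
  rcases eq_or_ne b 0 with hb | hb
  · subst hb
    rw [gaussianReal_zero_var, Measure.prod_dirac,
      Measure.map_map measurable_add measurable_prodMk_right]
    have : ((fun z : ℝ × ℝ => z.1 + z.2) ∘ (fun x : ℝ => (x, (0:ℝ)))) = id := by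
      funext y; simp
    rw [this, Measure.map_id, add_zero]
  have hab : a + b ≠ 0 := by simp [ha]
  ext s hs
  rw [Measure.map_apply measurable_add hs, Measure.prod_apply (measurable_add hs)]
  have hinner : ∀ x : ℝ, (gaussianReal 0 b) (Prod.mk x ⁻¹' ((fun z : ℝ × ℝ => z.1 + z.2) ⁻¹' s))
      = ∫⁻ u, s.indicator 1 u * gaussianPDF 0 b (u - x) := by
    intro x
    have hAm : MeasurableSet {y : ℝ | x + y ∈ s} := (measurable_const_add x) hs
    have hpre : (Prod.mk x ⁻¹' ((fun z : ℝ × ℝ => z.1 + z.2) ⁻¹' s)) = {y : ℝ | x + y ∈ s} := rfl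
    rw [hpre, gaussianReal_of_var_ne_zero 0 hb, withDensity_apply _ hAm,
      ← lintegral_indicator hAm _]
    have hpt : ∀ y : ℝ, {y : ℝ | x + y ∈ s}.indicator (gaussianPDF 0 b) y
        = (fun u => s.indicator 1 u * gaussianPDF 0 b (u - x)) (x + y) := by
      intro y
      by_cases hxy : x + y ∈ s
      · simp [Set.indicator_of_mem, hxy, Set.indicator_of_mem (show x + y ∈ s from hxy)]
      · simp [Set.indicator_of_notMem, hxy]
    rw [funext hpt]
    exact lintegral_add_left_eq_self (fun u => s.indicator 1 u * gaussianPDF 0 b (u - x)) x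
  simp only [hinner]
  rw [gaussianReal_of_var_ne_zero 0 ha,
    lintegral_withDensity_eq_lintegral_mul _ (measurable_gaussianPDF 0 a)
      (by
        apply Measurable.lintegral_prod_right (f := fun (x u : ℝ) => s.indicator 1 u * gaussianPDF 0 b (u - x))
        exact ((measurable_one.indicator hs).comp measurable_snd).mul
          ((measurable_gaussianPDF 0 b).comp (measurable_snd.sub measurable_fst)))]
  have hswap : ∫⁻ x, (gaussianPDF 0 a * fun x => ∫⁻ u, s.indicator 1 u * gaussianPDF 0 b (u - x)) x
      = ∫⁻ x, ∫⁻ u, gaussianPDF 0 a x * (s.indicator 1 u * gaussianPDF 0 b (u - x)) := by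
    congr 1; funext x
    simp only [Pi.mul_apply]
    have hm1 : Measurable fun u : ℝ => s.indicator 1 u * gaussianPDF 0 b (u - x) :=
      (measurable_one.indicator hs).mul
        ((measurable_gaussianPDF 0 b).comp (measurable_id.sub measurable_const))
    rw [← lintegral_const_mul _ hm1]
  rw [hswap, lintegral_lintegral_swap]
  · have hfin : ∀ u : ℝ, (∫⁻ x, gaussianPDF 0 a x * (s.indicator 1 u * gaussianPDF 0 b (u - x)))
        = s.indicator 1 u * gaussianPDF 0 (a + b) u := by
      intro u
      have : ∀ x : ℝ, gaussianPDF 0 a x * (s.indicator 1 u * gaussianPDF 0 b (u - x))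
          = s.indicator 1 u * (gaussianPDF 0 a x * gaussianPDF 0 b (u - x)) := by
        intro x; ring
      simp only [this]
      have hm2 : Measurable fun x : ℝ => gaussianPDF 0 a x * gaussianPDF 0 b (u - x) :=
        (measurable_gaussianPDF 0 a).mul
          ((measurable_gaussianPDF 0 b).comp (measurable_const.sub measurable_id))
      rw [lintegral_const_mul _ hm2, conv_lintegral a b ha hb u]
    simp only [hfin]
    rw [gaussianReal_apply 0 hab s, ← lintegral_indicator hs _]
    congr 1
    funext u
    by_cases hu : u ∈ s
    · simp [Set.indicator_of_mem hu]
    · simp [Set.indicator_of_notMem hu]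
  · apply Measurable.aemeasurable
    exact ((measurable_gaussianPDF 0 a).comp measurable_fst).mul
      (((measurable_one.indicator hs).comp measurable_snd).mul
        ((measurable_gaussianPDF 0 b).comp (measurable_snd.sub measurable_fst)))

lemma gaussianReal_Iic_toReal (τ m c : ℝ) (hτ : 0 < τ) :
    ((gaussianReal m ⟨τ^2, sq_nonneg τ⟩) (Set.Iic c)).toReal = stdGaussianCDF ((c - m)/τ) := by
  have h1 : ((gaussianReal 0 1).map (τ * ·)).map (· + m) = gaussianReal m ⟨τ^2, sq_nonneg τ⟩ := by
    rw [gaussianReal_map_const_mul τ, gaussianReal_map_add_const m]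
    norm_num
    rfl
  rw [← h1, Measure.map_apply (measurable_add_const m) measurableSet_Iic]
  have hs1 : ((· + m) ⁻¹' Set.Iic c) = Set.Iic (c - m) := by
    ext y; simp only [Set.mem_preimage, Set.mem_Iic]
    constructor <;> intro <;> linarith
  rw [hs1, Measure.map_apply (measurable_const_mul τ) measurableSet_Iic]
  have hset : ((τ * ·) ⁻¹' (Set.Iic (c - m))) = Set.Iic ((c - m)/τ) := by
    ext y
    simp only [Set.mem_preimage, Set.mem_Iic]
    rw [le_div_iff₀ hτ, mul_comm]
  rw [hset]
  rfl

lemma measurable_sum_mul {n : ℕ} (v : Fin n → ℝ) :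
    Measurable (fun δ : Fin n → ℝ => ∑ i, v i * δ i) := by
  apply Finset.measurable_sum
  intro i _
  have hi : Measurable fun δ : Fin n → ℝ => δ i := measurable_pi_apply i
  exact hi.const_mul (v i)

lemma pi_map_sum (n : ℕ) (s : ℝ≥0) (v : Fin n → ℝ) :
    (Measure.pi fun _ : Fin n => gaussianReal 0 s).map (fun δ => ∑ i, v i * δ i)
      = gaussianReal 0 (s * ⟨∑ i, v i ^ 2, by positivity⟩) := by
  induction n with
  | zero =>
    have h0 : (fun δ : Fin 0 → ℝ => ∑ i, v i * δ i) = fun _ => (0:ℝ) := by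
      funext δ; simp
    rw [h0, Measure.map_const]
    have h1 : (⟨∑ i : Fin 0, v i ^ 2, by positivity⟩ : ℝ≥0) = 0 := by
      ext; simp
    rw [show s * ⟨∑ i : Fin 0, v i ^ 2, by positivity⟩ = 0 from NNReal.eq (by show (s:ℝ) * ∑ i : Fin 0, v i ^ 2 = 0; simp), gaussianReal_zero_var]
    simp
  | succ n ih =>
    have mp := measurePreserving_piFinSuccAbove (fun _ : Fin (n+1) => gaussianReal 0 s) 0
    set e := MeasurableEquiv.piFinSuccAbove (fun _ : Fin (n+1) => ℝ) 0 with he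
    have hgm : Measurable (fun z : ℝ × (Fin n → ℝ) => v 0 * z.1 + ∑ j, v j.succ * z.2 j) := by
      apply Measurable.add
      · exact measurable_fst.const_mul (v 0)
      · exact (measurable_sum_mul (fun j => v j.succ)).comp measurable_snd
    have hcomp : (fun δ : Fin (n+1) → ℝ => ∑ i, v i * δ i)
        = (fun z : ℝ × (Fin n → ℝ) => v 0 * z.1 + ∑ j, v j.succ * z.2 j) ∘ e := by
      funext δ
      simp [Function.comp_apply, he, MeasurableEquiv.piFinSuccAbove_apply,
        Fin.sum_univ_succ, Fin.succAbove_zero, Fin.tail]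
    rw [hcomp, ← Measure.map_map hgm e.measurable, mp.map_eq]
    have h2 : (fun z : ℝ × (Fin n → ℝ) => v 0 * z.1 + ∑ j, v j.succ * z.2 j)
        = (fun w : ℝ × ℝ => w.1 + w.2) ∘
          (Prod.map (fun t : ℝ => v 0 * t) (fun y : Fin n → ℝ => ∑ j, v j.succ * y j)) := rfl
    have hpm : Measurable (Prod.map (fun t : ℝ => v 0 * t)
        (fun y : Fin n → ℝ => ∑ j, v j.succ * y j)) :=
      (measurable_const_mul (v 0)).prodMap (measurable_sum_mul (fun j => v j.succ))
    rw [h2, ← Measure.map_map measurable_add hpm,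
      ← Measure.map_prod_map _ _ (measurable_const_mul (v 0)) (measurable_sum_mul (fun j => v j.succ)),
      gaussianReal_map_const_mul (v 0), mul_zero, ih (fun j => v j.succ), gaussianReal_conv]
    congr 1
    ext
    show v 0 ^ 2 * (s:ℝ) + (s:ℝ) * ∑ i : Fin n, v i.succ ^ 2 = (s:ℝ) * ∑ i : Fin (n+1), v i ^ 2
    rw [Fin.sum_univ_succ]
    ring

lemma withDensity_map_equiv {α β : Type*} [MeasurableSpace α] [MeasurableSpace β]
    (e : α ≃ᵐ β) (m : Measure α) (D : β → ℝ≥0∞) (hD : Measurable D) :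
    (m.map e).withDensity D = (m.withDensity (fun a => D (e a))).map e := by
  ext s hs
  rw [withDensity_apply _ hs, Measure.map_apply e.measurable hs,
    withDensity_apply _ (e.measurable hs), setLIntegral_map hs hD e.measurable]

lemma prod_withDensity {α β : Type*} [MeasurableSpace α] [MeasurableSpace β]
    (μ : Measure α) (ν : Measure β) [SFinite μ] [SFinite ν]
    (f : α → ℝ≥0∞) (g : β → ℝ≥0∞) (hf : Measurable f) (hg : Measurable g)
    [SigmaFinite (μ.withDensity f)] [SigmaFinite (ν.withDensity g)] :
    (μ.withDensity f).prod (ν.withDensity g)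
      = (μ.prod ν).withDensity (fun z => f z.1 * g z.2) := by
  refine Measure.prod_eq fun s t hs ht => ?_
  rw [withDensity_apply _ (hs.prod ht), ← Measure.prod_restrict,
    lintegral_prod_mul hf.aemeasurable hg.aemeasurable,
    withDensity_apply _ hs, withDensity_apply _ ht]

lemma pi_withDensity (n : ℕ) (μ : Fin n → Measure ℝ) [∀ i, IsProbabilityMeasure (μ i)]
    (f : Fin n → ℝ → ℝ≥0∞) (hf : ∀ i, Measurable (f i))
    (hp : ∀ i, IsProbabilityMeasure ((μ i).withDensity (f i))) :
    Measure.pi (fun i => (μ i).withDensity (f i))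
      = (Measure.pi μ).withDensity (fun y => ∏ i, f i (y i)) := by
  induction n with
  | zero =>
    have h1 : (fun y : Fin 0 → ℝ => ∏ i, f i (y i)) = fun _ => 1 := by
      funext y; simp
    rw [h1]
    rw [show (fun _ : Fin 0 → ℝ => (1:ℝ≥0∞)) = (1 : (Fin 0 → ℝ) → ℝ≥0∞) from rfl,
      withDensity_one]
    rw [Measure.pi_of_empty, Measure.pi_of_empty]
  | succ n ih =>
    haveI := fun i => hp i
    have mpν := measurePreserving_piFinSuccAbove (fun i => (μ i).withDensity (f i)) 0
    have mpμ := measurePreserving_piFinSuccAbove μ 0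
    set e := MeasurableEquiv.piFinSuccAbove (fun _ : Fin (n+1) => ℝ) 0 with he
    have hν : Measure.pi (fun i => (μ i).withDensity (f i))
        = ((((μ 0).withDensity (f 0)).prod
            (Measure.pi (fun j => (μ (Fin.succAbove 0 j)).withDensity (f (Fin.succAbove 0 j))))).map
          e.symm) := by
      rw [← mpν.map_eq, Measure.map_map e.symm.measurable e.measurable]
      simp
    have hihinst : ∀ j : Fin n, IsProbabilityMeasure
        ((μ (Fin.succAbove 0 j)).withDensity (f (Fin.succAbove 0 j))) := fun j => hp _
    have ihtail := ih (fun j => μ (Fin.succAbove 0 j)) (fun j => f (Fin.succAbove 0 j))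
      (fun j => hf _) (fun j => hp _)
    rw [hν, ihtail]
    haveI := hp 0
    haveI : SigmaFinite ((Measure.pi fun j => μ (Fin.succAbove 0 j)).withDensity
        fun y => ∏ i, f (Fin.succAbove 0 i) (y i)) := by
      rw [← ihtail]; infer_instance
    rw [prod_withDensity _ _ _ _ (hf 0) (by
      exact Finset.measurable_prod _ (fun j _ => (hf _).comp (measurable_pi_apply j)))]
    have hK := withDensity_map_equiv e.symm
      ((μ 0).prod (Measure.pi fun j => μ (Fin.succAbove 0 j)))
      (fun y : Fin (n+1) → ℝ => ∏ i, f i (y i))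
      (Finset.measurable_prod _ (fun j _ => (hf _).comp (measurable_pi_apply j)))
    have hμmap : ((μ 0).prod (Measure.pi fun j => μ (Fin.succAbove 0 j))).map e.symm
        = Measure.pi μ := by
      rw [← mpμ.map_eq, Measure.map_map e.symm.measurable e.measurable]
      simp
    rw [hμmap] at hK
    have hd : (fun z : ℝ × (Fin n → ℝ) => f 0 z.1 * ∏ j, f (Fin.succAbove 0 j) (z.2 j))
        = (fun z : ℝ × (Fin n → ℝ) => ∏ i : Fin (n+1), f i (e.symm z i)) := by
      funext z
      simp only [he, MeasurableEquiv.piFinSuccAbove_symm_apply]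
      rw [Fin.prod_univ_succ]
      simp [Fin.succAbove_zero]
    rw [hd]
    exact hK.symm

instance gaussianE_isProbabilityMeasure (d : ℕ) (σ : ℝ) :
    IsProbabilityMeasure (gaussianE d σ) := by
  rw [gaussianE]
  haveI : IsProbabilityMeasure (Measure.pi fun _ : Fin d => gaussianReal 0 ⟨σ ^ 2, sq_nonneg σ⟩) :=
    @Measure.pi.instIsProbabilityMeasure _ _ _ _ _ (fun _ => instIsProbabilityMeasureGaussianReal 0 _)
  exact Measure.isProbabilityMeasure_map
    (MeasurableEquiv.toLp 2 (Fin d → ℝ)).measurable.aemeasurable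

lemma gaussianPDFReal_tilt (m : ℝ) (s : ℝ≥0) (hs : s ≠ 0) (t : ℝ) :
    gaussianPDFReal 0 s t * Real.exp ((t * m - m^2/2)/s) = gaussianPDFReal m s t := by
  have hs' : (0:ℝ) < s := by positivity
  simp only [gaussianPDFReal]
  rw [mul_assoc, ← Real.exp_add]
  congr 1
  field_simp
  ring

lemma gaussianReal_tilt (m : ℝ) (s : ℝ≥0) (hs : s ≠ 0) :
    (gaussianReal 0 s).withDensity (fun t => ENNReal.ofReal (Real.exp ((t * m - m^2/2)/s)))
      = gaussianReal m s := by
  have hexp : Measurable (fun t : ℝ => ENNReal.ofReal (Real.exp ((t * m - m^2/2)/s))) := by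
    apply ENNReal.measurable_ofReal.comp
    apply Real.measurable_exp.comp
    exact ((measurable_id.mul_const m).sub measurable_const).div_const _
  rw [gaussianReal_of_var_ne_zero 0 hs, gaussianReal_of_var_ne_zero m hs,
    ← withDensity_mul _ (measurable_gaussianPDF 0 s) hexp]
  congr 1
  funext t
  simp only [Pi.mul_apply, gaussianPDF]
  rw [← ENNReal.ofReal_mul (gaussianPDFReal_nonneg _ _ _), gaussianPDFReal_tilt m s hs t]

lemma measurable_euclidean_sum_mul (d : ℕ) (v : EuclideanSpace ℝ (Fin d)) :
    Measurable (fun δ : EuclideanSpace ℝ (Fin d) => ∑ i, v i * δ i) :=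
  (measurable_sum_mul (fun i => v i)).comp
    ((MeasurableEquiv.toLp 2 (Fin d → ℝ)).symm).measurable

lemma gaussianE_map_sum (d : ℕ) (σ : ℝ) (v : EuclideanSpace ℝ (Fin d)) :
    (gaussianE d σ).map (fun δ => ∑ i, v i * δ i)
      = gaussianReal 0 (⟨σ^2, sq_nonneg σ⟩ * ⟨∑ i, v i ^ 2, by positivity⟩) := by
  rw [gaussianE, Measure.map_map (measurable_euclidean_sum_mul d v)
    (MeasurableEquiv.toLp 2 (Fin d → ℝ)).measurable]
  have hc : ((fun δ : EuclideanSpace ℝ (Fin d) => ∑ i, v i * δ i)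
      ∘ (MeasurableEquiv.toLp 2 (Fin d → ℝ)))
      = fun y : Fin d → ℝ => ∑ i, (fun i => v i) i * y i := rfl
  rw [hc]; exact pi_map_sum _ _ _

lemma gaussianE_shift (d : ℕ) (σ : ℝ) (hσ : 0 < σ) (v : EuclideanSpace ℝ (Fin d)) :
    (gaussianE d σ).map (· + v)
      = (gaussianE d σ).withDensity
          (fun δ => ENNReal.ofReal (Real.exp ((∑ i, δ i * v i - (∑ i, v i ^ 2)/2)/σ^2))) := by
  set s₀ : ℝ≥0 := ⟨σ^2, sq_nonneg σ⟩ with hs₀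
  have hs₀ne : s₀ ≠ 0 := by
    intro hcon
    have : σ^2 = 0 := congrArg NNReal.toReal hcon
    nlinarith
  set E := (MeasurableEquiv.toLp 2 (Fin d → ℝ)).symm with hE
  have haddm : Measurable (fun y : Fin d → ℝ => fun i => y i + v i) := by
    apply measurable_pi_iff.mpr
    intro i
    have hpa : Measurable fun y : Fin d → ℝ => y i := measurable_pi_apply i
    exact hpa.add_const (v i)
  have htiltm : ∀ i : Fin d, Measurable
      (fun t : ℝ => ENNReal.ofReal (Real.exp ((t * v i - (v i)^2/2)/s₀))) := by
    intro i
    apply ENNReal.measurable_ofReal.comp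
    apply Real.measurable_exp.comp
    exact ((measurable_id.mul_const _).sub measurable_const).div_const _
  have hDstm : Measurable (fun δ : EuclideanSpace ℝ (Fin d) =>
      ENNReal.ofReal (Real.exp ((∑ i, δ i * v i - (∑ i, v i ^ 2)/2)/σ^2))) := by
    apply ENNReal.measurable_ofReal.comp
    apply Real.measurable_exp.comp
    apply Measurable.div_const
    apply Measurable.sub _ measurable_const
    exact Finset.measurable_sum _ (fun i _ =>
      ((measurable_pi_apply i).comp E.measurable).mul_const (v i))
  rw [gaussianE, show (MeasurableEquiv.toLp 2 (Fin d → ℝ)) = E.symm from rfl, ← hs₀, Measure.map_map (measurable_add_const v) E.symm.measurable]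
  have hfun : ((· + v) ∘ E.symm) = E.symm ∘ (fun y : Fin d → ℝ => fun i => y i + v i) := rfl
  rw [hfun, ← Measure.map_map E.symm.measurable haddm]
  have hstep : (Measure.pi fun _ : Fin d => gaussianReal 0 s₀).map
      (fun y : Fin d → ℝ => fun i => y i + v i)
      = Measure.pi (fun i : Fin d => gaussianReal (v i) s₀) := by
    refine (measurePreserving_pi _ _ (fun i => ⟨measurable_add_const (v i), ?_⟩)).map_eq
    rw [gaussianReal_map_add_const (v i), zero_add]
  rw [hstep]
  have hpi : (fun i : Fin d => gaussianReal (v i) s₀)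
      = fun i => (gaussianReal 0 s₀).withDensity
          (fun t => ENNReal.ofReal (Real.exp ((t * v i - (v i)^2/2)/s₀))) :=
    funext fun i => (gaussianReal_tilt (v i) s₀ hs₀ne).symm
  rw [hpi, pi_withDensity d _ _ htiltm (fun i => by
    rw [gaussianReal_tilt (v i) s₀ hs₀ne]; infer_instance)]
  rw [withDensity_map_equiv E.symm (Measure.pi fun _ : Fin d => gaussianReal 0 s₀) _ hDstm]
  refine congrArg (Measure.map ⇑E.symm) (congrArg (Measure.withDensity (Measure.pi fun _ : Fin d => gaussianReal 0 s₀)) (funext fun y => ?_))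
  rw [← ENNReal.ofReal_prod_of_nonneg (fun i _ => Real.exp_nonneg _)]
  congr 1
  rw [← Real.exp_sum]
  congr 1
  have hco : ((s₀ : ℝ)) = σ^2 := rfl
  have heq : ∀ i : Fin d, (y i * v i - (v i)^2/2)/(s₀:ℝ)
      = (y i * v i - (v i)^2/2)/σ^2 := fun i => by rw [hco]
  calc ∑ i, (y i * v i - (v i)^2/2)/(s₀:ℝ)
      = ∑ i, (y i * v i - (v i)^2/2)/σ^2 := Finset.sum_congr rfl (fun i _ => heq i)
    _ = (∑ i, (y i * v i - (v i)^2/2))/σ^2 := by rw [Finset.sum_div]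
    _ = (∑ i, (E.symm y) i * v i - (∑ i, v i ^ 2)/2)/σ^2 := by
        rw [Finset.sum_sub_distrib, Finset.sum_div]
        rfl

-- the key one-sided estimate
lemma key_estimate (d : ℕ) (σ : ℝ) (hσ : 0 < σ)
    (h : EuclideanSpace ℝ (Fin d) → ℝ) (hmeas : Measurable h)
    (hrange : ∀ z, h z ∈ Set.Icc (0 : ℝ) 1)
    (p : EuclideanSpace ℝ (Fin d) → ℝ)
    (hp : ∀ x, p x = ∫ δ, h (x + δ) ∂(gaussianE d σ))
    (x x' : EuclideanSpace ℝ (Fin d))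
    (hx : p x ∈ Set.Ioo (0 : ℝ) 1) (hne : x ≠ x') :
    stdGaussianCDF (stdGaussianCDFInv (p x) - ‖x' - x‖ / σ) ≤ p x' := by
  set μ := gaussianE d σ with hμdef
  set v : EuclideanSpace ℝ (Fin d) := x' - x with hv
  have hvne : v ≠ 0 := sub_ne_zero.mpr (Ne.symm hne)
  set r : ℝ := ‖v‖ with hr
  have hrpos : 0 < r := norm_pos_iff.mpr hvne
  have hτ : 0 < σ * r := mul_pos hσ hrpos
  have hsum2 : ∑ i, v i ^ 2 = r ^ 2 := by
    rw [hr, EuclideanSpace.norm_eq, Real.sq_sqrt (by positivity)]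
    apply Finset.sum_congr rfl
    intro i _
    rw [Real.norm_eq_abs, sq_abs]
  set L : EuclideanSpace ℝ (Fin d) → ℝ := fun δ => ∑ i, v i * δ i with hL
  have hLmeas : Measurable L := measurable_euclidean_sum_mul d v
  set t₀ : ℝ := stdGaussianCDFInv (p x) with ht₀
  set c : ℝ := σ * r * t₀ with hc
  set S : Set (EuclideanSpace ℝ (Fin d)) := {δ | L δ ≤ c} with hSdef
  have hS : MeasurableSet S := measurableSet_le hLmeas measurable_const
  have hlaw : μ.map L = gaussianReal 0 ⟨(σ*r)^2, sq_nonneg _⟩ := by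
    rw [hμdef, hL, gaussianE_map_sum d σ v]
    congr 1
    ext
    show σ ^ 2 * ∑ i, v i ^ 2 = (σ * r) ^ 2
    rw [hsum2]
    ring
  have hμS : (μ S).toReal = p x := by
    have h1 : μ S = (μ.map L) (Set.Iic c) := by
      rw [Measure.map_apply hLmeas measurableSet_Iic]
      rfl
    rw [h1, hlaw, gaussianReal_Iic_toReal (σ*r) 0 c hτ]
    have h2 : (c - 0)/(σ*r) = t₀ := by
      rw [hc]; field_simp; rw [sub_zero]
    rw [h2, ht₀]
    exact stdGaussianCDF_stdGaussianCDFInv hx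
  set ρ : EuclideanSpace ℝ (Fin d) → ℝ :=
    fun δ => Real.exp ((L δ - (∑ i, v i ^ 2)/2)/σ^2) with hρdef
  set ρc : ℝ := Real.exp ((c - (∑ i, v i ^ 2)/2)/σ^2) with hρc
  have hρmeas : Measurable ρ :=
    Real.measurable_exp.comp (((hLmeas.sub measurable_const)).div_const _)
  have hρnonneg : ∀ δ, 0 ≤ ρ δ := fun δ => Real.exp_nonneg _
  -- the tilted density equals the shift density
  have hDeq : (fun δ : EuclideanSpace ℝ (Fin d) =>
      ENNReal.ofReal (Real.exp ((∑ i, δ i * v i - (∑ i, v i ^ 2)/2)/σ^2)))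
      = fun δ => ((ρ δ).toNNReal : ℝ≥0∞) := by
    funext δ
    rw [hρdef]
    have : ∑ i, δ i * v i = L δ := by
      rw [hL]; exact Finset.sum_congr rfl fun i _ => mul_comm _ _
    rw [this]
    rfl
  have hshift : μ.map (· + v) = μ.withDensity (fun δ => ((ρ δ).toNNReal : ℝ≥0∞)) := by
    rw [hμdef, gaussianE_shift d σ hσ v, ← hDeq]
  set g : EuclideanSpace ℝ (Fin d) → ℝ := fun δ => h (x + δ) with hg
  have hgmeas : Measurable g := hmeas.comp (measurable_id.const_add x)
  have hg01 : ∀ δ, g δ ∈ Set.Icc (0:ℝ) 1 := fun δ => hrange _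
  -- p x' as a tilted integral
  have hpx' : p x' = ∫ δ, g δ * ρ δ ∂μ := by
    rw [hp x']
    have h1 : (fun δ => h (x' + δ)) = fun δ => g (δ + v) := by
      funext δ
      rw [hg]
      congr 1
      rw [hv]
      abel
    rw [h1]
    have h2 : ∫ δ, g (δ + v) ∂μ = ∫ z, g z ∂(μ.map (· + v)) :=
      (integral_map (measurable_add_const v).aemeasurable hgmeas.aestronglyMeasurable).symm
    have htoNN : Measurable fun δ : EuclideanSpace ℝ (Fin d) => (ρ δ).toNNReal :=
      measurable_real_toNNReal.comp hρmeas
    rw [h2, hshift, integral_withDensity_eq_integral_smul htoNN g]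
    congr 1
    funext δ
    rw [NNReal.smul_def, Real.coe_toNNReal _ (hρnonneg δ), smul_eq_mul, mul_comm]
  -- integrability of ρ
  have hρlint : ∫⁻ δ, ENNReal.ofReal (ρ δ) ∂μ = 1 := by
    have h1 : ∫⁻ δ, ENNReal.ofReal (ρ δ) ∂μ
        = (μ.withDensity (fun δ => ((ρ δ).toNNReal : ℝ≥0∞))) Set.univ := by
      rw [withDensity_apply _ MeasurableSet.univ, setLIntegral_univ]
      rfl
    rw [h1, ← hshift, Measure.map_apply (measurable_add_const v) MeasurableSet.univ]
    simp
  have hρint : Integrable ρ μ := by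
    constructor
    · exact hρmeas.aestronglyMeasurable
    · rw [hasFiniteIntegral_iff_ofReal (Filter.Eventually.of_forall hρnonneg), hρlint]
      exact ENNReal.one_lt_top
  have hgint : Integrable g μ := by
    apply Integrable.mono' (integrable_const (1:ℝ)) hgmeas.aestronglyMeasurable
    apply Filter.Eventually.of_forall
    intro δ
    rw [Real.norm_eq_abs, abs_of_nonneg (hg01 δ).1]
    exact (hg01 δ).2
  have hgρint : Integrable (fun δ => g δ * ρ δ) μ := by
    apply Integrable.mono' hρint (hgmeas.mul hρmeas).aestronglyMeasurable
    apply Filter.Eventually.of_forall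
    intro δ
    rw [Real.norm_eq_abs, Pi.mul_apply, abs_mul, abs_of_nonneg (hg01 δ).1, abs_of_nonneg (hρnonneg δ)]
    calc g δ * ρ δ ≤ 1 * ρ δ := mul_le_mul_of_nonneg_right (hg01 δ).2 (hρnonneg δ)
      _ = ρ δ := one_mul _
  have hindint : Integrable (fun δ => S.indicator (fun _ => (1:ℝ)) δ) μ := by
    apply Integrable.mono' (integrable_const (1:ℝ))
      ((measurable_const.indicator hS).aestronglyMeasurable)
    apply Filter.Eventually.of_forall
    intro δ
    rw [Real.norm_eq_abs]
    by_cases hδ : δ ∈ S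
    · rw [Set.indicator_of_mem hδ]; simp
    · rw [Set.indicator_of_notMem hδ]; simp
  have hindρint : Integrable (fun δ => S.indicator (fun _ => (1:ℝ)) δ * ρ δ) μ := by
    apply Integrable.mono' hρint
      ((measurable_const.indicator hS).mul hρmeas).aestronglyMeasurable
    apply Filter.Eventually.of_forall
    intro δ
    rw [Real.norm_eq_abs, Pi.mul_apply, abs_mul, abs_of_nonneg (hρnonneg δ)]
    by_cases hδ : δ ∈ S
    · rw [Set.indicator_of_mem hδ]; simp
    · rw [Set.indicator_of_notMem hδ]
      simp [hρnonneg δ]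
  -- value of ∫ g
  have hgval : ∫ δ, g δ ∂μ = p x := (hp x).symm
  -- value of ∫ indicator
  have hindval : ∫ δ, S.indicator (fun _ => (1:ℝ)) δ ∂μ = p x := by
    rw [integral_indicator_const (1:ℝ) hS, smul_eq_mul, mul_one]; exact hμS
  -- value of ∫ indicator * ρ
  have hindρval : ∫ δ, S.indicator (fun _ => (1:ℝ)) δ * ρ δ ∂μ
      = stdGaussianCDF (t₀ - r/σ) := by
    have h1 : (fun δ => S.indicator (fun _ => (1:ℝ)) δ * ρ δ) = S.indicator ρ := by
      funext δ
      by_cases hδ : δ ∈ S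
      · rw [Set.indicator_of_mem hδ, Set.indicator_of_mem hδ, one_mul]
      · rw [Set.indicator_of_notMem hδ, Set.indicator_of_notMem hδ, zero_mul]
    rw [h1, integral_indicator hS]
    -- rewrite ρ through L
    set s₁ : ℝ≥0 := ⟨(σ*r)^2, sq_nonneg _⟩ with hs₁
    have hs₁ne : s₁ ≠ 0 := by
      intro hcon
      have : (σ*r)^2 = 0 := congrArg NNReal.toReal hcon
      nlinarith
    set eℓ : ℝ → ℝ := fun u => Real.exp ((u * r^2 - (r^2)^2/2)/(s₁:ℝ)) with heℓ
    have heq : ∀ δ, ρ δ = eℓ (L δ) := by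
      intro δ
      show Real.exp ((L δ - (∑ i, v i ^ 2) / 2) / σ ^ 2)
          = Real.exp ((L δ * r ^ 2 - (r ^ 2) ^ 2 / 2) / (s₁:ℝ))
      rw [hsum2, show ((s₁:ℝ)) = (σ*r)^2 from rfl]
      congr 1
      generalize L δ = u
      field_simp
    have heqf : (fun δ => ρ δ) = fun δ => eℓ (L δ) := funext heq
    have hmeℓ : Measurable eℓ :=
      Real.measurable_exp.comp (((measurable_id.mul_const _).sub measurable_const).div_const _)
    calc ∫ δ in S, ρ δ ∂μ = ∫ δ in S, eℓ (L δ) ∂μ := by rw [heqf]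
      _ = ∫ u in Set.Iic c, eℓ u ∂(μ.map L) := by
          rw [setIntegral_map measurableSet_Iic
            (hmeℓ.aestronglyMeasurable) hLmeas.aemeasurable]
          rfl
      _ = (∫⁻ u in Set.Iic c, ENNReal.ofReal (eℓ u) ∂(μ.map L)).toReal := by
          rw [integral_eq_lintegral_of_nonneg_ae
            (Filter.Eventually.of_forall fun u => Real.exp_nonneg _)
            hmeℓ.aestronglyMeasurable.restrict]
      _ = (((μ.map L).withDensity (fun u => ENNReal.ofReal (eℓ u))) (Set.Iic c)).toReal := by
          rw [withDensity_apply _ measurableSet_Iic]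
      _ = ((gaussianReal (r^2) s₁) (Set.Iic c)).toReal := by
          rw [hlaw, gaussianReal_tilt (r^2) s₁ hs₁ne]
      _ = stdGaussianCDF ((c - r^2)/(σ*r)) :=
          gaussianReal_Iic_toReal (σ*r) (r^2) c hτ
      _ = stdGaussianCDF (t₀ - r/σ) := by
          congr 1
          rw [hc]
          field_simp
  -- Neyman–Pearson pointwise comparison
  have hNP : ∀ δ, 0 ≤ (g δ - S.indicator (fun _ => (1:ℝ)) δ) * (ρ δ - ρc) := by
    intro δ
    by_cases hδ : δ ∈ S
    · rw [Set.indicator_of_mem hδ]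
      have h1' : g δ - 1 ≤ 0 := by linarith [(hg01 δ).2]
      have hLδ : L δ ≤ c := hδ
      have hargs : (L δ - (∑ i, v i ^ 2)/2)/σ^2 ≤ (c - (∑ i, v i ^ 2)/2)/σ^2 := by
        gcongr
      have h2' : ρ δ - ρc ≤ 0 := by
        have := Real.exp_le_exp.mpr hargs
        simp only [hρdef, hρc]
        linarith
      nlinarith [mul_nonneg (neg_nonneg.mpr h1') (neg_nonneg.mpr h2')]
    · rw [Set.indicator_of_notMem hδ]
      apply mul_nonneg
      · simpa using (hg01 δ).1
      · have hLδ : c ≤ L δ := (not_le.mp hδ).le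
        have hargs : (c - (∑ i, v i ^ 2)/2)/σ^2 ≤ (L δ - (∑ i, v i ^ 2)/2)/σ^2 := by
          gcongr
        have := Real.exp_le_exp.mpr hargs
        simp only [hρdef, hρc]
        linarith
  have hint1 : Integrable
      (fun δ => g δ * ρ δ - S.indicator (fun _ => (1:ℝ)) δ * ρ δ) μ := hgρint.sub hindρint
  have hint2 : Integrable
      (fun δ => ρc * g δ - ρc * S.indicator (fun _ => (1:ℝ)) δ) μ :=
    (hgint.const_mul ρc).sub (hindint.const_mul ρc)
  have hφ : 0 ≤ ∫ δ, (g δ - S.indicator (fun _ => (1:ℝ)) δ) * (ρ δ - ρc) ∂μ :=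
    integral_nonneg hNP
  have hexpand : ∫ δ, (g δ - S.indicator (fun _ => (1:ℝ)) δ) * (ρ δ - ρc) ∂μ
      = ((∫ δ, g δ * ρ δ ∂μ) - stdGaussianCDF (t₀ - r/σ))
        - (ρc * (p x) - ρc * (p x)) := by
    have hfe : (fun δ => (g δ - S.indicator (fun _ => (1:ℝ)) δ) * (ρ δ - ρc))
        = fun δ => (g δ * ρ δ - S.indicator (fun _ => (1:ℝ)) δ * ρ δ)
            - (ρc * g δ - ρc * S.indicator (fun _ => (1:ℝ)) δ) := by
      funext δ; ring
    rw [hfe, integral_sub hint1 hint2, integral_sub hgρint hindρint,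
      integral_sub (hgint.const_mul ρc) (hindint.const_mul ρc),
      integral_const_mul, integral_const_mul, hindρval, hgval, hindval]
  rw [hpx']
  rw [hexpand] at hφ
  linarith


theorem stmt_0 (d : ℕ) (σ : ℝ) (hσ : 0 < σ)
    (h : EuclideanSpace ℝ (Fin d) → ℝ) (hmeas : Measurable h)
    (hrange : ∀ z, h z ∈ Set.Icc (0 : ℝ) 1)
    (p : EuclideanSpace ℝ (Fin d) → ℝ)
    (hp : ∀ x, p x = ∫ δ, h (x + δ) ∂(gaussianE d σ))
    (x x' : EuclideanSpace ℝ (Fin d))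
    (hx : p x ∈ Set.Ioo (0 : ℝ) 1) (hx' : p x' ∈ Set.Ioo (0 : ℝ) 1) :
    σ * |stdGaussianCDFInv (p x) - stdGaussianCDFInv (p x')| ≤ ‖x - x'‖ := by
  rcases eq_or_ne x x' with heq | hne
  · subst heq
    simp
  · have h1 := key_estimate d σ hσ h hmeas hrange p hp x x' hx hne
    have h2 := key_estimate d σ hσ h hmeas hrange p hp x' x hx' hne.symm
    have h1' : stdGaussianCDFInv (p x) - ‖x' - x‖/σ ≤ stdGaussianCDFInv (p x') :=
      le_stdGaussianCDFInv hx'.2 h1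
    have h2' : stdGaussianCDFInv (p x') - ‖x - x'‖/σ ≤ stdGaussianCDFInv (p x) :=
      le_stdGaussianCDFInv hx.2 h2
    have hnorm : ‖x' - x‖ = ‖x - x'‖ := norm_sub_rev _ _
    rw [hnorm] at h1'
    have habs : |stdGaussianCDFInv (p x) - stdGaussianCDFInv (p x')| ≤ ‖x - x'‖/σ := by
      rw [abs_sub_le_iff]
      constructor
      · linarith
      · linarith
    calc σ * |stdGaussianCDFInv (p x) - stdGaussianCDFInv (p x')|
        ≤ σ * (‖x - x'‖/σ) := mul_le_mul_of_nonneg_left habs hσ.le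
      _ = ‖x - x'‖ := by field_simp
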